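/- Suppose there exist u, v in the support of F with u < θ/2 < v and u + v > θ. Then the probability measures H(da,db) = 1{a+b>θ} F(da)F(db)/α_F(θ) and G(da)G(db), where G(da) = (1-F(θ-a)) F(da)/α_F(θ) and α_F(θ) = P(X_1 + X_2 > θ), are not equal. -/
import Mathlib


open MeasureTheory Set

/-- Suppose there exist `u, v` in the support of `F` (i.e. the law `μ`
charges every neighbourhood of them) with `u < θ/2 < v` and `u + v > θ`. Then the
probability measure `H(da,db) = 1{a+b>θ} μ(da)μ(db) / α_F(θ)` is not equal to the
product measure `G ⊗ G`, where `G(da) = (1-F(θ-a)) μ(da) / α_F(θ)` and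
`α_F(θ) = P(X₁ + X₂ > θ)`. -/
theorem stmt_7 (μ : Measure ℝ) [IsProbabilityMeasure μ] (θ : ℝ) (hθ : 0 < θ)
    (u v : ℝ)
    (hu : ∀ ε > 0, 0 < μ (Ioc (u - ε) (u + ε)))
    (hv : ∀ ε > 0, 0 < μ (Ioc (v - ε) (v + ε)))
    (huθ : u < θ / 2) (hvθ : θ / 2 < v) (huv : θ < u + v)
    (α : ENNReal) (hα : α = (μ.prod μ) {p : ℝ × ℝ | θ < p.1 + p.2})
    (H : Measure (ℝ × ℝ))
    (hH : H = α⁻¹ • (μ.prod μ).restrict {p : ℝ × ℝ | θ < p.1 + p.2})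
    (G : Measure ℝ)
    (hG : G = α⁻¹ • μ.withDensity (fun a => μ (Ioi (θ - a)))) :
    H ≠ G.prod G := by
  intro heq
  set ε : ℝ := min (θ / 2 - u) ((u + v - θ) / 2) with hε_def
  have hε : 0 < ε := lt_min (by linarith) (by linarith)
  have hε1 : ε ≤ θ / 2 - u := min_le_left _ _
  have hε2 : ε ≤ (u + v - θ) / 2 := min_le_right _ _
  set A : Set ℝ := Ioc (u - ε) (u + ε) with hA_def
  set B : Set ℝ := Ioc (v - ε) (v + ε) with hB_def
  have hμA : 0 < μ A := hu ε hε
  have hμB : 0 < μ B := hv ε hε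
  have hAmeas : MeasurableSet A := measurableSet_Ioc
  -- α ≤ 1, hence α⁻¹ ≠ 0
  have hα1 : α ≤ 1 := by
    rw [hα]; exact prob_le_one
  have hαinv : α⁻¹ ≠ 0 := by
    simp only [ne_eq, ENNReal.inv_eq_zero]
    exact fun h => by simp [h] at hα1
  -- H (A ×ˢ A) = 0
  have hH0 : H (A ×ˢ A) = 0 := by
    rw [hH]
    have hempty : (A ×ˢ A) ∩ {p : ℝ × ℝ | θ < p.1 + p.2} = ∅ := by
      ext p
      simp only [mem_inter_iff, mem_prod, mem_Ioc, mem_setOf_eq, mem_empty_iff_false,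
        iff_false, not_and]
      rintro ⟨⟨_, h1⟩, ⟨_, h2⟩⟩
      linarith
    have : MeasurableSet {p : ℝ × ℝ | θ < p.1 + p.2} := by
      apply measurableSet_lt measurable_const
      exact measurable_fst.add measurable_snd
    rw [Measure.smul_apply, Measure.restrict_apply' this]
    rw [hempty]
    simp
  -- G A > 0
  have hGA : 0 < G A := by
    rw [hG]
    rw [Measure.smul_apply, withDensity_apply _ hAmeas]
    have hlow : μ B * μ A ≤ ∫⁻ a in A, μ (Ioi (θ - a)) ∂μ := by
      have : ∫⁻ a in A, μ (Ioi (θ - a)) ∂μ ≥ ∫⁻ _ in A, μ B ∂μ := by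
        apply setLIntegral_mono' hAmeas
        intro a ha
        apply measure_mono
        intro x hx
        simp only [hB_def, mem_Ioc] at hx
        simp only [mem_Ioi]
        have haA : u - ε < a := ha.1
        have : θ - a < v - ε := by linarith
        linarith [hx.1]
      simpa [setLIntegral_const] using this
    have hpos : 0 < ∫⁻ a in A, μ (Ioi (θ - a)) ∂μ :=
      lt_of_lt_of_le (ENNReal.mul_pos hμB.ne' hμA.ne') hlow
    exact ENNReal.mul_pos hαinv hpos.ne'
  -- contradiction
  have hprod : (G.prod G) (A ×ˢ A) = G A * G A := by
    rw [hG]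
    exact Measure.prod_prod A A
  rw [heq, hprod] at hH0
  exact absurd hH0 (ENNReal.mul_pos hGA.ne' hGA.ne').ne'
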